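/- Let M be a DFA over a finite alphabet Σ with finitely many states. Then the language accepted by M is bounded if and only if there do NOT exist a state q and words p, u, v, s such that: evaluating M on p from the start state reaches q, reading s from q reaches an accepting state, reading u from q returns to q, reading v from q returns to q, and u, v are prefix-incomparable. -/

import Mathlib

open Computability

/-- The product of Kleene stars of singletons `w₁*·w₂*·⋯·wₙ*`. -/
def prodStars {A : Type*} (ws : List (List A)) : Language A :=
  (ws.map fun w => ({w} : Language A)∗).prod

section Basic
variable {A : Type*}

lemma prodStars_cons (w : List A) (ws : List (List A)) :
    prodStars (w :: ws) = ({w} : Language A)∗ * prodStars ws := by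
  simp [prodStars]

lemma mem_singleton_kstar_iff {w x : List A} :
    x ∈ ({w} : Language A)∗ ↔ ∃ n, x = (List.replicate n w).flatten := by
  rw [Language.mem_kstar]
  constructor
  · rintro ⟨L, rfl, hL⟩
    have hrep : L = List.replicate L.length w :=
      List.eq_replicate_iff.2 ⟨rfl, fun b hb => hL b hb⟩
    exact ⟨L.length, by rw [← hrep]⟩
  · rintro ⟨n, rfl⟩
    exact ⟨List.replicate n w, rfl, fun y hy => (List.eq_of_mem_replicate hy) ▸ rfl⟩

lemma self_mem_singleton_kstar (w : List A) : w ∈ ({w} : Language A)∗ :=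
  mem_singleton_kstar_iff.2 ⟨1, by simp⟩

lemma prodStars_le_cons (w : List A) (ws : List (List A)) :
    prodStars ws ≤ prodStars (w :: ws) := by
  intro x hx
  rw [prodStars_cons]
  exact ⟨[], Language.nil_mem_kstar _, x, hx, rfl⟩

lemma prodStars_mono {ws₁ ws₂ : List (List A)} (h : List.Sublist ws₁ ws₂) :
    prodStars ws₁ ≤ prodStars ws₂ := by
  induction h with
  | slnil => exact le_rfl
  | cons a _ ih => exact ih.trans (prodStars_le_cons _ _)
  | cons_cons a h ih =>
      rw [prodStars_cons, prodStars_cons]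
      exact mul_le_mul' le_rfl ih

lemma append_mem_prodStars_cons {w c x : List A} {ws : List (List A)}
    (hc : c ∈ ({w} : Language A)∗) (hx : x ∈ prodStars ws) :
    c ++ x ∈ prodStars (w :: ws) := by
  rw [prodStars_cons]; exact ⟨c, hc, x, hx, rfl⟩

lemma sublist_flatten_replicate (El : List (List A)) :
    ∀ (K : ℕ) (pat : List (List A)), pat.length ≤ K → (∀ e ∈ pat, e ∈ El) →
      List.Sublist pat (List.replicate K El).flatten := by
  intro K
  induction K with
  | zero => intro pat h _; simp [List.length_eq_zero_iff.1 (Nat.le_zero.1 h)]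
  | succ k ih =>
    intro pat hlen hmem
    cases pat with
    | nil => exact List.nil_sublist _
    | cons e rest =>
      have : (List.replicate (k+1) El).flatten = El ++ (List.replicate k El).flatten := by
        simp [List.replicate_succ]
      rw [this]
      have h1 : List.Sublist [e] El := List.singleton_sublist.2 (hmem e (by simp))
      have h2 : List.Sublist rest (List.replicate k El).flatten :=
        ih rest (Nat.le_of_succ_le_succ hlen) (fun x hx => hmem x (by simp [hx]))
      simpa using h1.append h2

end Basic

section Cyc
variable {A σ : Type*} (M : DFA A σ)

lemma exists_cycle_word
    (H : ∀ (q : σ) (p u v s : List A),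
        M.evalFrom M.start p = q → M.evalFrom q s ∈ M.accept →
        M.evalFrom q u = q → M.evalFrom q v = q → u <+: v ∨ v <+: u) :
    ∃ x : σ → List A, ∀ q : σ,
      (∃ p, M.evalFrom M.start p = q) → (∃ s, M.evalFrom q s ∈ M.accept) →
      ∀ c, M.evalFrom q c = q → c ∈ ({x q} : Language A)∗ := by
  have key : ∀ q : σ, ∃ xq : List A,
      (∃ p, M.evalFrom M.start p = q) → (∃ s, M.evalFrom q s ∈ M.accept) →
      ∀ c, M.evalFrom q c = q → c ∈ ({xq} : Language A)∗ := by
    intro q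
    by_cases hC : ∃ c : List A, c ≠ [] ∧ M.evalFrom q c = q
    · have hP : ∃ n, ∃ c : List A, c.length = n ∧ c ≠ [] ∧ M.evalFrom q c = q := by
        obtain ⟨c, hc1, hc2⟩ := hC; exact ⟨c.length, c, rfl, hc1, hc2⟩
      classical
      obtain ⟨xq, hxlen, hxne, hxcyc⟩ := Nat.find_spec hP
      refine ⟨xq, ?_⟩
      rintro ⟨p, hp⟩ ⟨s, hs⟩
      have hmin : ∀ c : List A, c ≠ [] → M.evalFrom q c = q → xq.length ≤ c.length := by
        intro c hc1 hc2
        rw [hxlen]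
        exact Nat.find_le ⟨c, rfl, hc1, hc2⟩
      suffices h : ∀ (n : ℕ) (c : List A), c.length ≤ n → M.evalFrom q c = q →
          c ∈ ({xq} : Language A)∗ by
        intro c hc; exact h c.length c le_rfl hc
      intro n
      induction n with
      | zero =>
        intro c hlen hc
        rw [List.length_eq_zero_iff.1 (Nat.le_zero.1 hlen)]
        exact Language.nil_mem_kstar _
      | succ n ih =>
        intro c hlen hc
        rcases eq_or_ne c [] with rfl | hne
        · exact Language.nil_mem_kstar _
        · have hle := hmin c hne hc
          have hpre : xq <+: c := by
            rcases H q p xq c s hp hs hxcyc hc with h | h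
            · exact h
            · have hlen2 : c.length = xq.length := le_antisymm h.length_le hle
              rw [h.eq_of_length hlen2]
          obtain ⟨d, rfl⟩ := hpre
          have hd : M.evalFrom q d = q := by
            rw [DFA.evalFrom_of_append, hxcyc] at hc; exact hc
          have hdlen : d.length ≤ n := by
            rw [List.length_append] at hlen
            have hx1 : 1 ≤ xq.length := List.length_pos_iff.2 hxne
            omega
          obtain ⟨m, rfl⟩ := mem_singleton_kstar_iff.1 (ih d hdlen hd)
          exact mem_singleton_kstar_iff.2 ⟨m + 1, by simp [List.replicate_succ]⟩
    · refine ⟨[], fun _ _ c hc => ?_⟩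
      have hcnil : c = [] := by
        by_contra hne
        exact hC ⟨c, hne, hc⟩
      rw [hcnil]
      exact Language.nil_mem_kstar _
  exact Classical.axiomOfChoice key

end Cyc

section Decomp
variable {A σ : Type*} [Fintype σ] [DecidableEq σ] (M : DFA A σ)

lemma decomp (x : σ → List A)
    (hx : ∀ q : σ, (∃ p, M.evalFrom M.start p = q) → (∃ s, M.evalFrom q s ∈ M.accept) →
      ∀ c, M.evalFrom q c = q → c ∈ ({x q} : Language A)∗) :
    ∀ (n : ℕ) (S : Finset σ) (q : σ) (w : List A),
      (Finset.univ \ S).card ≤ n →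
      (∃ p, M.evalFrom M.start p = q) →
      M.evalFrom q w ∈ M.accept →
      (∀ t, t <+: w → M.evalFrom q t ∉ S) →
      ∃ pat : List (List A),
        (∀ e ∈ pat, (∃ a : A, e = [a]) ∨ (∃ q' : σ, e = x q')) ∧
        pat.length ≤ 2 * (Finset.univ \ S).card ∧
        w ∈ prodStars pat := by
  classical
  intro n
  induction n with
  | zero =>
    intro S q w hcard _ _ havoid
    have hqS : q ∉ S := by simpa using havoid [] List.nil_prefix
    have : 0 < (Finset.univ \ S).card :=
      Finset.card_pos.2 ⟨q, Finset.mem_sdiff.2 ⟨Finset.mem_univ q, hqS⟩⟩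
    omega
  | succ n ih =>
    intro S q w hcard hreach hacc havoid
    have hqS : q ∉ S := by simpa using havoid [] List.nil_prefix
    have hq1 : 0 < (Finset.univ \ S).card :=
      Finset.card_pos.2 ⟨q, Finset.mem_sdiff.2 ⟨Finset.mem_univ q, hqS⟩⟩
    -- the longest returning prefix
    set nset : Finset ℕ :=
      (Finset.range (w.length + 1)).filter (fun m => M.evalFrom q (w.take m) = q) with hnset
    have h0 : (0 : ℕ) ∈ nset := by
      simp [hnset]
    have hne : nset.Nonempty := ⟨0, h0⟩
    set nmax := nset.max' hne with hnmax
    have hnmem := Finset.mem_filter.1 (nset.max'_mem hne)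
    have hnlt : nmax < w.length + 1 := Finset.mem_range.1 (hnmax ▸ hnmem.1)
    have hc : M.evalFrom q (w.take nmax) = q := hnmax ▸ hnmem.2
    set c := w.take nmax with hcdef
    set w' := w.drop nmax with hw'def
    have hcw : c ++ w' = w := List.take_append_drop _ _
    have hclen : c.length = nmax := by
      rw [hcdef, List.length_take]; omega
    have hnoret : ∀ t, t <+: w' → t ≠ [] → M.evalFrom q t ≠ q := by
      intro t ht htne heq
      have htake : w.take (nmax + t.length) = c ++ t := by
        rw [List.take_add]
        congr 1
        exact (List.prefix_iff_eq_take.1 ht).symm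
      have hlenle : nmax + t.length ≤ w.length := by
        have := ht.length_le
        rw [hw'def, List.length_drop] at this
        omega
      have hmem2 : nmax + t.length ∈ nset := by
        rw [hnset, Finset.mem_filter, Finset.mem_range]
        refine ⟨by omega, ?_⟩
        rw [htake, DFA.evalFrom_of_append, hc, heq]
      have := nset.le_max' _ hmem2
      rw [← hnmax] at this
      have : t.length = 0 := by omega
      exact htne (List.length_eq_zero_iff.1 this)
    have hacc' : M.evalFrom q w' ∈ M.accept := by
      have : M.evalFrom q w' = M.evalFrom q w := by
        conv_rhs => rw [← hcw]
        rw [DFA.evalFrom_of_append, hc]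
      rw [this]; exact hacc
    have hcyc : c ∈ ({x q} : Language A)∗ := hx q hreach ⟨w', hacc'⟩ c hc
    rcases hw'' : w' with _ | ⟨a, w''⟩
    · -- w = c
      refine ⟨[x q], ?_, ?_, ?_⟩
      · intro e he; right; exact ⟨q, List.mem_singleton.1 he⟩
      · simpa using by omega
      · have hwc : w = c := by rw [← hcw, hw'']; simp
        rw [hwc]
        have : c ++ [] ∈ prodStars [x q] :=
          append_mem_prodStars_cons hcyc (by simp [prodStars])
        simpa using this
    · set q₂ := M.step q a with hq₂
      have hstep : ∀ t : List A, M.evalFrom q (a :: t) = M.evalFrom q₂ t := fun t => rfl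
      have hreach₂ : ∃ p, M.evalFrom M.start p = q₂ := by
        obtain ⟨p, hp⟩ := hreach
        exact ⟨p ++ (c ++ [a]), by
          rw [DFA.evalFrom_of_append, hp, DFA.evalFrom_of_append, hc,
            DFA.evalFrom_singleton]⟩
      have hacc₂ : M.evalFrom q₂ w'' ∈ M.accept := by
        rw [← hstep, ← hw'']; exact hacc'
      have havoid₂ : ∀ t, t <+: w'' → M.evalFrom q₂ t ∉ insert q S := by
        intro t ht
        have h1 : (a :: t) <+: w' := by
          rw [hw'']; obtain ⟨r, rfl⟩ := ht; exact ⟨r, rfl⟩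
        have h2 : (c ++ (a :: t)) <+: w := by
          rw [← hcw]; obtain ⟨r, hr⟩ := h1; exact ⟨r, by rw [List.append_assoc, hr]⟩
        have hSS : M.evalFrom q₂ t ∉ S := by
          have := havoid _ h2
          rwa [DFA.evalFrom_of_append, hc, hstep] at this
        have hQQ : M.evalFrom q₂ t ≠ q := by
          rw [← hstep]
          exact hnoret _ h1 (by simp)
        simp [Finset.mem_insert, hQQ, hSS]
      have hsete : Finset.univ \ insert q S = (Finset.univ \ S).erase q := by
        ext z; simp [Finset.mem_sdiff, Finset.mem_erase, Finset.mem_insert]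
      have hcard₂ : (Finset.univ \ insert q S).card ≤ n := by
        rw [hsete, Finset.card_erase_of_mem
          (Finset.mem_sdiff.2 ⟨Finset.mem_univ q, hqS⟩)]
        omega
      obtain ⟨pat'', hpat'', hlen'', hmem''⟩ :=
        ih (insert q S) q₂ w'' hcard₂ hreach₂ hacc₂ havoid₂
      refine ⟨x q :: [a] :: pat'', ?_, ?_, ?_⟩
      · intro e he
        simp only [List.mem_cons] at he
        rcases he with he | he | he
        · right; exact ⟨q, he⟩
        · left; exact ⟨a, he⟩
        · exact hpat'' e he
      · have hc2 : (Finset.univ \ insert q S).card = (Finset.univ \ S).card - 1 := by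
          rw [hsete, Finset.card_erase_of_mem
            (Finset.mem_sdiff.2 ⟨Finset.mem_univ q, hqS⟩)]
        simp only [List.length_cons]
        omega
      · have hw : w = c ++ ([a] ++ w'') := by rw [← hcw, hw'']; rfl
        rw [hw]
        exact append_mem_prodStars_cons hcyc
          (append_mem_prodStars_cons (self_mem_singleton_kstar _) hmem'')

end Decomp

section Counting

/-- Reconstruct a word from exponents. -/
def recon {A : Type*} (ws : List (List A)) (es : List ℕ) : List A :=
  (List.zipWith (fun w n => (List.replicate n w).flatten) ws es).flatten

lemma prodStars_exists_exponents {A : Type*} :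
    ∀ (ws : List (List A)) (y : List A), y ∈ prodStars ws →
      ∃ es : List ℕ, es.length = ws.length ∧ y = recon ws es ∧
        ∀ pr ∈ ws.zip es, pr.1 = [] → pr.2 = 0 := by
  intro ws
  induction ws with
  | nil =>
    intro y hy
    refine ⟨[], rfl, ?_, by simp⟩
    simpa [prodStars, recon] using hy
  | cons w ws ih =>
    intro y hy
    rw [prodStars_cons] at hy
    obtain ⟨c, hc, z, hz, rfl⟩ := hy
    obtain ⟨m, rfl⟩ := mem_singleton_kstar_iff.1 hc
    obtain ⟨es, hlen, hrec, hzero⟩ := ih z hz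
    rcases eq_or_ne w [] with rfl | hwne
    · refine ⟨0 :: es, by simp [hlen], ?_, ?_⟩
      · simp [recon, hrec]
      · intro pr hpr
        rw [List.zip_cons_cons] at hpr
        rcases List.mem_cons.1 hpr with h | h
        · rw [h]; intro _; rfl
        · exact hzero pr h
    · refine ⟨m :: es, by simp [hlen], ?_, ?_⟩
      · simp [recon, hrec]
      · intro pr hpr
        rw [List.zip_cons_cons] at hpr
        rcases List.mem_cons.1 hpr with h | h
        · rw [h]; intro hw; exact absurd hw hwne
        · exact hzero pr h

lemma exponent_le_length {A : Type*} :
    ∀ (ws : List (List A)) (es : List ℕ) (w : List A) (n : ℕ),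
      (w, n) ∈ ws.zip es → w ≠ [] → n ≤ (recon ws es).length := by
  intro ws
  induction ws with
  | nil => intro es w n h; simp at h
  | cons w₀ ws ih =>
    intro es w n h hwne
    cases es with
    | nil => simp at h
    | cons e es =>
      rw [List.zip_cons_cons] at h
      have hlenrec : (recon (w₀ :: ws) (e :: es)).length =
          e * w₀.length + (recon ws es).length := by
        simp [recon, List.replicate_succ]
      rcases List.mem_cons.1 h with h | h
      · have hww : w = w₀ ∧ n = e := by simpa using h
        obtain ⟨rfl, rfl⟩ := hww
        have h1 : 1 ≤ w.length := List.length_pos_iff.2 hwne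
        nlinarith [hlenrec.le]
      · have := ih es w n h hwne
        omega

lemma sq_lt_two_pow : ∀ t : ℕ, 5 ≤ t → t * t < 2 ^ t := by
  intro t ht
  induction t, ht using Nat.le_induction with
  | base => norm_num
  | succ t ht ih =>
    clear* - ht ih
    have h1 : 2 * t + 1 ≤ t * t := by nlinarith
    calc (t+1) * (t+1) = t * t + (2*t+1) := by ring
    _ < 2^t + (2*t+1) := by omega
    _ ≤ 2^t + 2^t := by omega
    _ = 2^(t+1) := by ring

lemma exists_linear_lt_two_pow (c b : ℕ) : ∃ t, c * t + b < 2 ^ t := by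
  refine ⟨c + b + 6, ?_⟩
  set t := c + b + 6 with hts
  have h5 : 5 ≤ t := by omega
  have h1 : c * t + b ≤ (c + b) * t := by
    have : 1 ≤ t := by omega
    nlinarith
  have h2 : (c + b) * t < t * t := by
    have : c + b < t := by omega
    exact Nat.mul_lt_mul_of_lt_of_le this le_rfl (by omega)
  exact lt_of_le_of_lt h1 (h2.trans (sq_lt_two_pow t h5))

lemma growth_contradiction {C D L : ℕ} (h : ∀ k, 2 ^ k ≤ (k * C + D + 1) ^ L) : False := by
  set B := C + D + 1 with hB
  have key : ∀ t : ℕ, 2 ^ t ≤ (t + B) * L := by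
    intro t
    have hk := h (2 ^ t)
    have h2 : 1 ≤ 2 ^ t := Nat.one_le_two_pow
    have h3 : B ≤ 2 ^ B := Nat.le_of_lt (Nat.lt_two_pow_self (n := B))
    have h4 : (2:ℕ) ^ (2 ^ t) ≤ (2 ^ (t + B)) ^ L := by
      calc (2:ℕ) ^ (2^t) ≤ (2^t * C + D + 1) ^ L := hk
      _ ≤ (2 ^ (t+B)) ^ L := Nat.pow_le_pow_left (by rw [pow_add]; nlinarith) L
    rw [← pow_mul] at h4
    exact (Nat.pow_le_pow_iff_right (by omega)).1 h4
  obtain ⟨t, ht⟩ := exists_linear_lt_two_pow L (B * L)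
  have := key t
  nlinarith

end Counting

section Mix
variable {A : Type*} (u v : List A)

def mixList (b : List Bool) : List A :=
  (b.map (fun t => if t then u else v)).flatten

lemma mixList_cons (t : Bool) (b : List Bool) :
    mixList u v (t :: b) = (if t then u else v) ++ mixList u v b := by
  simp [mixList]

lemma mixList_length_le (b : List Bool) :
    (mixList u v b).length ≤ b.length * max u.length v.length := by
  induction b with
  | nil => simp [mixList]
  | cons t b ih =>
    rw [mixList_cons, List.length_append]
    have : (if t then u else v).length ≤ max u.length v.length := by
      cases t <;> simp
    calc (if t then u else v).length + (mixList u v b).length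
        ≤ max u.length v.length + b.length * max u.length v.length := by omega
      _ = (b.length + 1) * max u.length v.length := by ring
      _ = (t :: b).length * max u.length v.length := by simp

lemma mixList_inj (hnuv : ¬ u <+: v) (hnvu : ¬ v <+: u) :
    ∀ b₁ b₂ : List Bool, b₁.length = b₂.length →
      mixList u v b₁ = mixList u v b₂ → b₁ = b₂ := by
  intro b₁
  induction b₁ with
  | nil => intro b₂ hl _; exact (List.length_eq_zero_iff.1 hl.symm).symm
  | cons t₁ b₁ ih =>
    intro b₂ hl hm
    cases b₂ with
    | nil => simp at hl
    | cons t₂ b₂ =>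
      rw [mixList_cons, mixList_cons] at hm
      have hteq : t₁ = t₂ := by
        by_contra hne
        have hcomp : (if t₁ then u else v) <+: (if t₂ then u else v) ∨
            (if t₂ then u else v) <+: (if t₁ then u else v) :=
          List.prefix_or_prefix_of_prefix ⟨_, hm⟩ ⟨_, rfl⟩
        cases t₁ <;> cases t₂ <;> simp_all
      subst hteq
      have := List.append_cancel_left hm
      rw [ih b₂ (by simpa using hl) this]

lemma evalFrom_mixList {σ : Type*} (M : DFA A σ) {q : σ}
    (hu : M.evalFrom q u = q) (hv : M.evalFrom q v = q) :
    ∀ b : List Bool, M.evalFrom q (mixList u v b) = q := by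
  intro b
  induction b with
  | nil => simp [mixList]
  | cons t b ih =>
    rw [mixList_cons, DFA.evalFrom_of_append]
    have h : M.evalFrom q (if t then u else v) = q := by cases t <;> simp [hu, hv]
    rw [h]; exact ih

end Mix

/-- L(M) is bounded iff M has no reachable, co-reachable state with two
prefix-incomparable cycle words. -/
theorem accepts_bounded_iff {A σ : Type*} [Fintype A] [Fintype σ] (M : DFA A σ) :
    (∃ ws : List (List A), M.accepts ≤ prodStars ws) ↔
      ¬ ∃ (q : σ) (p u v s : List A),
        M.evalFrom M.start p = q ∧
        M.evalFrom q s ∈ M.accept ∧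
        M.evalFrom q u = q ∧
        M.evalFrom q v = q ∧
        ¬ u <+: v ∧ ¬ v <+: u := by
  classical
  constructor
  · rintro ⟨ws, hws⟩ ⟨q, p, u, v, s, hp, hs, hu, hv, hnuv, hnvu⟩
    set C := max u.length v.length with hC
    set D := p.length + s.length with hD
    apply growth_contradiction (C := C) (D := D) (L := ws.length)
    intro k
    set N := k * C + D with hN
    -- for each f : Fin k → Bool, produce a word in the language
    have hyacc : ∀ f : Fin k → Bool,
        p ++ mixList u v (List.ofFn f) ++ s ∈ M.accepts := by
      intro f
      have : M.evalFrom M.start (p ++ mixList u v (List.ofFn f) ++ s) ∈ M.accept := by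
        rw [DFA.evalFrom_of_append, DFA.evalFrom_of_append, hp,
          evalFrom_mixList u v M hu hv]
        exact hs
      exact this
    have hylen : ∀ f : Fin k → Bool,
        (p ++ mixList u v (List.ofFn f) ++ s).length ≤ N := by
      intro f
      have h1 := mixList_length_le u v (List.ofFn f)
      rw [List.length_ofFn] at h1
      simp only [List.length_append, hN, hD, hC]
      omega
    -- choose exponents
    have hexp : ∀ f : Fin k → Bool, ∃ es : List ℕ, es.length = ws.length ∧
        p ++ mixList u v (List.ofFn f) ++ s = recon ws es ∧
        ∀ pr ∈ ws.zip es, pr.1 = [] → pr.2 = 0 :=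
      fun f => prodStars_exists_exponents ws _ (hws (hyacc f))
    choose es hlen hrec hzero using hexp
    -- the exponents are bounded by N
    have hbound : ∀ (f : Fin k → Bool) (i : Fin ws.length),
        (es f).get ⟨i, by rw [hlen f]; exact i.isLt⟩ ≤ N := by
      intro f i
      have hmem : (ws.get i, (es f).get ⟨i, by rw [hlen f]; exact i.isLt⟩) ∈ ws.zip (es f) := by
        have : (ws.zip (es f)).get ⟨i, by simp [List.length_zip, hlen f, i.isLt]⟩ =
            (ws.get i, (es f).get ⟨i, by rw [hlen f]; exact i.isLt⟩) := by
          simp [List.get_eq_getElem, List.getElem_zip]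
        rw [← this]
        exact List.get_mem _ _
      rcases eq_or_ne (ws.get i) [] with hnil | hnne
      · have h0 := hzero f _ hmem hnil
        simp only at h0
        omega
      · have := exponent_le_length ws (es f) _ _ hmem hnne
        rw [← hrec f] at this
        exact this.trans (hylen f)
    -- the injection
    set E : (Fin k → Bool) → (Fin ws.length → Fin (N + 1)) :=
      fun f i => ⟨(es f).get ⟨i, by rw [hlen f]; exact i.isLt⟩, Nat.lt_succ_of_le (hbound f i)⟩ with hE
    have hinj : Function.Injective E := by
      intro f g hfg
      have hes : es f = es g := by
        apply List.ext_getElem (by rw [hlen, hlen])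
        intro i h1 h2
        have hi : i < ws.length := by rw [← hlen f]; exact h1
        have := congrFun hfg ⟨i, hi⟩
        simpa [hE] using congrArg Fin.val this
      have hyeq : p ++ mixList u v (List.ofFn f) ++ s =
          p ++ mixList u v (List.ofFn g) ++ s := by
        rw [hrec f, hrec g, hes]
      have hmix : mixList u v (List.ofFn f) = mixList u v (List.ofFn g) :=
        List.append_cancel_left (List.append_cancel_right hyeq)
      have hof : List.ofFn f = List.ofFn g :=
        mixList_inj u v hnuv hnvu _ _ (by simp) hmix
      exact List.ofFn_injective hof
    have hcard := Fintype.card_le_of_injective E hinj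
    simpa [Fintype.card_fun, hN] using hcard
  · intro hno
    have H : ∀ (q : σ) (p u v s : List A),
        M.evalFrom M.start p = q → M.evalFrom q s ∈ M.accept →
        M.evalFrom q u = q → M.evalFrom q v = q → u <+: v ∨ v <+: u := by
      intro q p u v s h1 h2 h3 h4
      by_contra hcon
      rw [not_or] at hcon
      exact hno ⟨q, p, u, v, s, h1, h2, h3, h4, hcon.1, hcon.2⟩
    obtain ⟨x, hx⟩ := exists_cycle_word M H
    set K := 2 * Fintype.card σ with hK
    set Elist : List (List A) :=
      ((Finset.univ : Finset A).toList.map (fun a => [a])) ++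
        ((Finset.univ : Finset σ).toList.map x) with hElist
    refine ⟨(List.replicate K Elist).flatten, ?_⟩
    intro w hw
    have hcard0 : (Finset.univ \ (∅ : Finset σ)).card = Fintype.card σ := by
      simp
    obtain ⟨pat, hpatE, hpatlen, hpatmem⟩ :=
      decomp M x hx (Fintype.card σ) ∅ M.start w (le_of_eq hcard0) ⟨[], rfl⟩ hw
        (by simp)
    have hsub : List.Sublist pat (List.replicate K Elist).flatten := by
      apply sublist_flatten_replicate
      · rw [hK]; rw [hcard0] at hpatlen; exact hpatlen
      · intro e he
        rcases hpatE e he with ⟨a, rfl⟩ | ⟨q', rfl⟩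
        · rw [hElist]
          exact List.mem_append_left _ (List.mem_map_of_mem (by simp))
        · rw [hElist]
          exact List.mem_append_right _ (List.mem_map_of_mem (by simp))
    exact prodStars_mono hsub hpatmem
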